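/- Let L ≥ 2 be an integer, N = 2^L, ℓ ∈ {1,…,L−1}, and A ∈ ℂ^{N×N}. Then the infimum over M in the ℓ-th Monarch class (i.e., M = XY with supp(X) ⊆ supp(S_1⋯S_ℓ) and supp(Y) ⊆ supp(S_{ℓ+1}⋯S_L)) of ‖A − M‖_F² equals the sum over i ∈ {1,…,N/2^ℓ} and j ∈ {1,…,2^ℓ} of the infimum over column vectors x indexed by R^(ℓ)_i and y indexed by C^(ℓ)_j of ‖A_{R^(ℓ)_i, C^(ℓ)_j} − x y*‖_F², where y* denotes the conjugate transpose of y. -/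

import Mathlib

open Matrix Kronecker

/-- The `n × n` all-ones matrix `J_n`. -/
def Jmat (n : ℕ) : Matrix (Fin n) (Fin n) ℂ := Matrix.of fun _ _ => 1

lemma two_pow_div (L ℓ : ℕ) (h : ℓ ≤ L) : 2 ^ L / 2 ^ ℓ = 2 ^ (L - ℓ) :=
  Nat.pow_div h (by norm_num)

lemma two_pow_mul_div (L ℓ : ℕ) (h : ℓ ≤ L) : 2 ^ ℓ * (2 ^ L / 2 ^ ℓ) = 2 ^ L :=
  Nat.mul_div_cancel' (pow_dvd_pow 2 h)

lemma bfly_dim (L ℓ : ℕ) (h1 : 1 ≤ ℓ) (h2 : ℓ ≤ L) :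
    2 ^ (ℓ - 1) * (2 * (2 ^ L / 2 ^ ℓ)) = 2 ^ L := by
  rw [two_pow_div L ℓ h2, show (2 : ℕ) * 2 ^ (L - ℓ) = 2 ^ (L - ℓ + 1) by rw [pow_succ]; ring,
    ← pow_add]
  congr 1
  omega

/-- Reindexing equivalence `Fin 2^(ℓ-1) × (Fin 2 × Fin (2^L/2^ℓ)) ≃ Fin 2^L`,
sending `(a, (b, c))` to the lexicographic index `a·(2·2^L/2^ℓ) + b·(2^L/2^ℓ) + c`. -/
def bflyEquiv (L ℓ : ℕ) (h1 : 1 ≤ ℓ) (h2 : ℓ ≤ L) :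
    Fin (2 ^ (ℓ - 1)) × (Fin 2 × Fin (2 ^ L / 2 ^ ℓ)) ≃ Fin (2 ^ L) :=
  ((Equiv.refl _).prodCongr finProdFinEquiv).trans
    (finProdFinEquiv.trans (finCongr (bfly_dim L ℓ h1 h2)))

/-- The butterfly support `S_ℓ = I_{2^{ℓ-1}} ⊗ J_2 ⊗ I_{N/2^ℓ}`, as an `N × N` matrix,
`N = 2^L`. -/
def bflySupp (L ℓ : ℕ) (h1 : 1 ≤ ℓ) (h2 : ℓ ≤ L) : Matrix (Fin (2 ^ L)) (Fin (2 ^ L)) ℂ :=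
  Matrix.reindex (bflyEquiv L ℓ h1 h2) (bflyEquiv L ℓ h1 h2)
    ((1 : Matrix (Fin (2 ^ (ℓ - 1))) (Fin (2 ^ (ℓ - 1))) ℂ) ⊗ₖ
      (Jmat 2 ⊗ₖ (1 : Matrix (Fin (2 ^ L / 2 ^ ℓ)) (Fin (2 ^ L / 2 ^ ℓ)) ℂ)))

/-- Reindexing equivalence `Fin 2^ℓ × Fin (2^L/2^ℓ) ≃ Fin 2^L` (lexicographic). -/
def blockEquiv (L ℓ : ℕ) (h : ℓ ≤ L) : Fin (2 ^ ℓ) × Fin (2 ^ L / 2 ^ ℓ) ≃ Fin (2 ^ L) :=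
  finProdFinEquiv.trans (finCongr (two_pow_mul_div L ℓ h))

/-- The matrix `J_{2^ℓ} ⊗ I_{N/2^ℓ}`, as an `N × N` matrix, `N = 2^L`. -/
def JkronI (L ℓ : ℕ) (h : ℓ ≤ L) : Matrix (Fin (2 ^ L)) (Fin (2 ^ L)) ℂ :=
  Matrix.reindex (blockEquiv L ℓ h) (blockEquiv L ℓ h)
    (Jmat (2 ^ ℓ) ⊗ₖ (1 : Matrix (Fin (2 ^ L / 2 ^ ℓ)) (Fin (2 ^ L / 2 ^ ℓ)) ℂ))

/-- The matrix `I_{2^ℓ} ⊗ J_{N/2^ℓ}`, as an `N × N` matrix, `N = 2^L`. -/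
def IkronJ (L ℓ : ℕ) (h : ℓ ≤ L) : Matrix (Fin (2 ^ L)) (Fin (2 ^ L)) ℂ :=
  Matrix.reindex (blockEquiv L ℓ h) (blockEquiv L ℓ h)
    ((1 : Matrix (Fin (2 ^ ℓ)) (Fin (2 ^ ℓ)) ℂ) ⊗ₖ Jmat (2 ^ L / 2 ^ ℓ))

/-- The `k`-th element of the canonical row index set `R^(ℓ)_i` (0-based):
`i + k·(N/2^ℓ)`, for `i ∈ Fin (N/2^ℓ)`, `k ∈ Fin 2^ℓ`, `N = 2^L`. -/
def rowIdx (L ℓ : ℕ) (h : ℓ ≤ L) (i : Fin (2 ^ L / 2 ^ ℓ)) (k : Fin (2 ^ ℓ)) : Fin (2 ^ L) :=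
  ⟨(i : ℕ) + (k : ℕ) * (2 ^ L / 2 ^ ℓ), by
    have hi := i.isLt
    have hk := k.isLt
    calc (i : ℕ) + (k : ℕ) * (2 ^ L / 2 ^ ℓ)
        < 2 ^ L / 2 ^ ℓ + (k : ℕ) * (2 ^ L / 2 ^ ℓ) := by omega
      _ = ((k : ℕ) + 1) * (2 ^ L / 2 ^ ℓ) := by ring
      _ ≤ 2 ^ ℓ * (2 ^ L / 2 ^ ℓ) := Nat.mul_le_mul_right _ (by omega)
      _ = 2 ^ L := two_pow_mul_div L ℓ h⟩

/-- The `k`-th element of the canonical column index set `C^(ℓ)_j` (0-based):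
`j·(N/2^ℓ) + k`, for `j ∈ Fin 2^ℓ`, `k ∈ Fin (N/2^ℓ)`, `N = 2^L`. -/
def colIdx (L ℓ : ℕ) (h : ℓ ≤ L) (j : Fin (2 ^ ℓ)) (k : Fin (2 ^ L / 2 ^ ℓ)) : Fin (2 ^ L) :=
  ⟨(j : ℕ) * (2 ^ L / 2 ^ ℓ) + (k : ℕ), by
    have hj := j.isLt
    have hk := k.isLt
    calc (j : ℕ) * (2 ^ L / 2 ^ ℓ) + (k : ℕ)
        < (j : ℕ) * (2 ^ L / 2 ^ ℓ) + (2 ^ L / 2 ^ ℓ) := by omega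
      _ = ((j : ℕ) + 1) * (2 ^ L / 2 ^ ℓ) := by ring
      _ ≤ 2 ^ ℓ * (2 ^ L / 2 ^ ℓ) := Nat.mul_le_mul_right _ (by omega)
      _ = 2 ^ L := two_pow_mul_div L ℓ h⟩

/-- The squared Frobenius norm `‖A‖_F²` of a complex matrix. -/
noncomputable def frobSq {m n : Type*} [Fintype m] [Fintype n] (A : Matrix m n ℂ) : ℝ :=
  ∑ i, ∑ j, ‖A i j‖ ^ 2
lemma bflySupp_congr (L : ℕ) {k k' : ℕ} (h : k = k') (h1 : 1 ≤ k) (h2 : k ≤ L)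
    (h1' : 1 ≤ k') (h2' : k' ≤ L) : bflySupp L k h1 h2 = bflySupp L k' h1' h2' := by
  subst h; rfl

lemma bflySupp_apply (L k : ℕ) (h1 : 1 ≤ k) (h2 : k ≤ L) (a b : Fin (2 ^ L)) :
    bflySupp L k h1 h2 a b =
      if (a : ℕ) / (2 * (2 ^ L / 2 ^ k)) = (b : ℕ) / (2 * (2 ^ L / 2 ^ k)) ∧
         (a : ℕ) % (2 ^ L / 2 ^ k) = (b : ℕ) % (2 ^ L / 2 ^ k) then 1 else 0 := by
  set m := 2 ^ L / 2 ^ k with hm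
  simp only [bflySupp, bflyEquiv, Matrix.reindex_apply, Matrix.submatrix_apply,
    Equiv.symm_trans_apply, Equiv.prodCongr_symm, Equiv.refl_symm, Equiv.prodCongr_apply,
    Equiv.coe_refl, finCongr_symm, finCongr_apply, Matrix.kroneckerMap_apply,
    Matrix.one_apply, Jmat, Matrix.of_apply, Prod.map, finProdFinEquiv,
    Equiv.coe_fn_symm_mk, Fin.divNat, Fin.modNat, Fin.coe_cast, id_eq, Fin.mk.injEq]
  have hmod : ∀ c : ℕ, c % (2 * m) % m = c % m := fun c =>
    Nat.mod_mod_of_dvd c ⟨2, by ring⟩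
  rw [hmod, hmod]
  by_cases hdiv : (a : ℕ) / (2 * m) = (b : ℕ) / (2 * m) <;>
    by_cases hmd : (a : ℕ) % m = (b : ℕ) % m <;> simp [hdiv, hmd, ← hm]

lemma prod_bfly (L u : ℕ) : ∀ (d : ℕ), u + d ≤ L →
    ∀ (h1 : ∀ p : Fin d, 1 ≤ u + 1 + (p : ℕ)) (h2 : ∀ p : Fin d, u + 1 + (p : ℕ) ≤ L)
      (a b : Fin (2 ^ L)),
    (List.ofFn fun p : Fin d => bflySupp L (u + 1 + (p : ℕ)) (h1 p) (h2 p)).prod a b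
      = if (a : ℕ) / 2 ^ (L - u) = (b : ℕ) / 2 ^ (L - u) ∧
           (a : ℕ) % 2 ^ (L - (u + d)) = (b : ℕ) % 2 ^ (L - (u + d)) then 1 else 0 := by
  intro d
  induction d with
  | zero =>
    intro hd h1 h2 a b
    simp only [List.ofFn_zero, List.prod_nil, Matrix.one_apply, Nat.add_zero]
    have key : ((a : ℕ) / 2 ^ (L - u) = (b : ℕ) / 2 ^ (L - u) ∧
        (a : ℕ) % 2 ^ (L - u) = (b : ℕ) % 2 ^ (L - u)) ↔ a = b := by
      constructor
      · rintro ⟨hq, hr⟩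
        apply Fin.ext
        have h3 := Nat.div_add_mod (a : ℕ) (2 ^ (L - u))
        have h4 := Nat.div_add_mod (b : ℕ) (2 ^ (L - u))
        rw [hq, hr] at h3
        omega
      · rintro rfl; exact ⟨rfl, rfl⟩
    rw [if_congr key rfl rfl]
  | succ d ih =>
    intro hd h1 h2 a b
    rw [List.ofFn_succ', List.concat_eq_append, List.prod_append, List.prod_singleton]
    set D := 2 ^ (L - u) with hD
    set M := 2 ^ (L - (u + d)) with hM
    set M' := 2 ^ (L - (u + (d + 1))) with hM'
    have hMpos : 0 < M := Nat.pow_pos (by norm_num)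
    have hM'pos : 0 < M' := Nat.pow_pos (by norm_num)
    have hML : 2 ^ L / 2 ^ (u + 1 + d) = M' := by
      rw [two_pow_div L _ (by omega)]; congr 1; omega
    have hMM' : M = 2 * M' := by
      rw [hM, hM', show L - (u + d) = (L - (u + d + 1)) + 1 by omega, pow_succ]; ring
    have hDM : D = M * 2 ^ d := by
      rw [hD, hM, ← pow_add]; congr 1; omega
    have hM'M : M' ∣ M := ⟨2, by omega⟩
    have hM2L : M ∣ 2 ^ L := Nat.pow_dvd_pow 2 (Nat.sub_le L _)
    have divDM : ∀ c : ℕ, c / D = c / M / 2 ^ d := fun c => by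
      rw [hDM, Nat.div_div_eq_div_mul]
    have modM' : ∀ c : ℕ, c % M % M' = c % M' := fun c => Nat.mod_mod_of_dvd c hM'M
    have hterm : ∀ c : Fin (2 ^ L),
        (List.ofFn fun i : Fin d =>
            bflySupp L (u + 1 + (i.castSucc : ℕ)) (h1 i.castSucc) (h2 i.castSucc)).prod a c *
          bflySupp L (u + 1 + ((Fin.last d : Fin (d+1)) : ℕ)) (h1 (Fin.last d)) (h2 (Fin.last d)) c b
        = (if (a : ℕ) / D = (c : ℕ) / D ∧ (a : ℕ) % M = (c : ℕ) % M then 1 else 0) *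
          (if (c : ℕ) / M = (b : ℕ) / M ∧ (c : ℕ) % M' = (b : ℕ) % M' then 1 else 0) := by
      intro c
      have e1 : (List.ofFn fun i : Fin d =>
          bflySupp L (u + 1 + (i.castSucc : ℕ)) (h1 i.castSucc) (h2 i.castSucc) : List _)
          = List.ofFn fun p : Fin d => bflySupp L (u + 1 + (p : ℕ))
              (by omega) (by have := p.isLt; omega) := by
        congr 1
      rw [e1, ih (by omega) _ _ a c, bflySupp_apply]
      simp only [Fin.val_last, hML, ← hMM']
    rw [Matrix.mul_apply]
    rw [Finset.sum_congr rfl (fun c _ => hterm c)]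
    by_cases hc : (a : ℕ) / D = (b : ℕ) / D ∧ (a : ℕ) % M' = (b : ℕ) % M'
    · rw [if_pos hc]
      have hbM : (b : ℕ) / M < 2 ^ L / M := Nat.div_lt_div_of_lt_of_dvd hM2L b.isLt
      have hmodlt : (a : ℕ) % M < M := Nat.mod_lt _ hMpos
      have hlt : M * ((b : ℕ) / M) + (a : ℕ) % M < 2 ^ L := by
        have h6 : M * ((b : ℕ) / M) + (a : ℕ) % M < M * ((b : ℕ) / M + 1) := by
          rw [Nat.mul_add, Nat.mul_one]; omega
        have h7 : M * ((b : ℕ) / M + 1) ≤ M * (2 ^ L / M) := Nat.mul_le_mul_left M (by omega)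
        have h8 : M * (2 ^ L / M) = 2 ^ L := Nat.mul_div_cancel' hM2L
        omega
      set c₀ : Fin (2 ^ L) := ⟨M * ((b : ℕ) / M) + (a : ℕ) % M, hlt⟩ with hc₀
      have hc₀M : (c₀ : ℕ) % M = (a : ℕ) % M := by
        show (M * ((b : ℕ) / M) + (a : ℕ) % M) % M = _
        rw [Nat.add_comm, Nat.add_mul_mod_self_left, Nat.mod_mod_of_dvd _ dvd_rfl]
      have hc₀div : (c₀ : ℕ) / M = (b : ℕ) / M := by
        show (M * ((b : ℕ) / M) + (a : ℕ) % M) / M = _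
        rw [Nat.mul_add_div hMpos, Nat.div_eq_of_lt hmodlt, Nat.add_zero]
      have hc₀D : (a : ℕ) / D = (c₀ : ℕ) / D := by
        rw [divDM (c₀ : ℕ), hc₀div, ← divDM, hc.1]
      have hc₀M' : (c₀ : ℕ) % M' = (b : ℕ) % M' := by
        rw [← modM' (c₀ : ℕ), hc₀M, modM', hc.2]
      rw [Finset.sum_eq_single_of_mem c₀ (Finset.mem_univ _) ?h0]
      · rw [if_pos ⟨hc₀D, hc₀M.symm⟩, if_pos ⟨hc₀div, hc₀M'⟩, one_mul]
      case h0 =>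
        intro c _ hne
        by_cases h₁ : (a : ℕ) / D = (c : ℕ) / D ∧ (a : ℕ) % M = (c : ℕ) % M
        · by_cases h₂ : (c : ℕ) / M = (b : ℕ) / M ∧ (c : ℕ) % M' = (b : ℕ) % M'
          · exfalso
            apply hne
            apply Fin.ext
            have h9 := Nat.div_add_mod (c : ℕ) M
            rw [h₂.1, ← h₁.2] at h9
            exact h9.symm
          · rw [if_neg h₂, mul_zero]
        · rw [if_neg h₁, zero_mul]
    · rw [if_neg hc]
      apply Finset.sum_eq_zero
      intro c _
      by_cases h₁ : (a : ℕ) / D = (c : ℕ) / D ∧ (a : ℕ) % M = (c : ℕ) % M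
      · by_cases h₂ : (c : ℕ) / M = (b : ℕ) / M ∧ (c : ℕ) % M' = (b : ℕ) % M'
        · exfalso
          apply hc
          constructor
          · rw [h₁.1, divDM, h₂.1, ← divDM]
          · rw [← modM' (a : ℕ), h₁.2, modM', h₂.2]
        · rw [if_neg h₂, mul_zero]
      · rw [if_neg h₁, zero_mul]
lemma prodX_apply (L ℓ : ℕ) (hℓL : ℓ ≤ L)
    (h1 : ∀ p : Fin ℓ, 1 ≤ (p : ℕ) + 1) (h2 : ∀ p : Fin ℓ, (p : ℕ) + 1 ≤ L)
    (a b : Fin (2 ^ L)) :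
    (List.ofFn fun p : Fin ℓ => bflySupp L ((p : ℕ) + 1) (h1 p) (h2 p)).prod a b =
      if (a : ℕ) % 2 ^ (L - ℓ) = (b : ℕ) % 2 ^ (L - ℓ) then 1 else 0 := by
  have e : (List.ofFn fun p : Fin ℓ => bflySupp L ((p : ℕ) + 1) (h1 p) (h2 p)) =
      List.ofFn fun p : Fin ℓ => bflySupp L (0 + 1 + (p : ℕ))
        (by omega) (by have := p.isLt; omega) := by
    congr 1
    funext p
    exact bflySupp_congr L (by omega) _ _ _ _
  rw [e, prod_bfly L 0 ℓ (by omega)]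
  have hda : (a : ℕ) / 2 ^ (L - 0) = 0 := Nat.div_eq_of_lt (by simpa using a.isLt)
  have hdb : (b : ℕ) / 2 ^ (L - 0) = 0 := Nat.div_eq_of_lt (by simpa using b.isLt)
  rw [hda, hdb]
  simp

lemma prodY_apply (L ℓ : ℕ) (hℓL : ℓ ≤ L)
    (h1 : ∀ p : Fin (L - ℓ), 1 ≤ ℓ + 1 + (p : ℕ)) (h2 : ∀ p : Fin (L - ℓ), ℓ + 1 + (p : ℕ) ≤ L)
    (a b : Fin (2 ^ L)) :
    (List.ofFn fun p : Fin (L - ℓ) => bflySupp L (ℓ + 1 + (p : ℕ)) (h1 p) (h2 p)).prod a b =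
      if (a : ℕ) / 2 ^ (L - ℓ) = (b : ℕ) / 2 ^ (L - ℓ) then 1 else 0 := by
  rw [prod_bfly L ℓ (L - ℓ) (by omega)]
  have h0 : L - (ℓ + (L - ℓ)) = 0 := by omega
  rw [h0]
  simp [Nat.mod_one]

lemma frobSq_nonneg {m n : Type*} [Fintype m] [Fintype n] (A : Matrix m n ℂ) : 0 ≤ frobSq A :=
  Finset.sum_nonneg fun _ _ => Finset.sum_nonneg fun _ _ => by positivity

lemma frobSq_blocks (L ℓ : ℕ) (h : ℓ ≤ L) (M : Matrix (Fin (2 ^ L)) (Fin (2 ^ L)) ℂ) :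
    frobSq M = ∑ i : Fin (2 ^ L / 2 ^ ℓ), ∑ j : Fin (2 ^ ℓ),
      frobSq (M.submatrix (rowIdx L ℓ h i) (colIdx L ℓ h j)) := by
  have hrow : ∀ g : Fin (2 ^ L) → ℝ, ∑ a, g a =
      ∑ i : Fin (2 ^ L / 2 ^ ℓ), ∑ k : Fin (2 ^ ℓ), g (rowIdx L ℓ h i k) := by
    intro g
    rw [← Equiv.sum_comp (blockEquiv L ℓ h) g, Fintype.sum_prod_type, Finset.sum_comm]
    refine Finset.sum_congr rfl fun i _ => Finset.sum_congr rfl fun k _ => ?_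
    congr 1
    apply Fin.ext
    show (i : ℕ) + 2 ^ L / 2 ^ ℓ * (k : ℕ) = (i : ℕ) + (k : ℕ) * (2 ^ L / 2 ^ ℓ)
    ring
  have hcol : ∀ g : Fin (2 ^ L) → ℝ, ∑ a, g a =
      ∑ j : Fin (2 ^ ℓ), ∑ k : Fin (2 ^ L / 2 ^ ℓ), g (colIdx L ℓ h j k) := by
    intro g
    rw [← Equiv.sum_comp (blockEquiv L ℓ h) g, Fintype.sum_prod_type]
    refine Finset.sum_congr rfl fun j _ => Finset.sum_congr rfl fun k _ => ?_
    congr 1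
    apply Fin.ext
    show (k : ℕ) + 2 ^ L / 2 ^ ℓ * (j : ℕ) = (j : ℕ) * (2 ^ L / 2 ^ ℓ) + (k : ℕ)
    ring
  calc frobSq M = ∑ i : Fin (2 ^ L / 2 ^ ℓ), ∑ k : Fin (2 ^ ℓ), ∑ b,
        ‖M (rowIdx L ℓ h i k) b‖ ^ 2 := hrow _
    _ = ∑ i : Fin (2 ^ L / 2 ^ ℓ), ∑ k : Fin (2 ^ ℓ), ∑ j : Fin (2 ^ ℓ),
          ∑ k' : Fin (2 ^ L / 2 ^ ℓ), ‖M (rowIdx L ℓ h i k) (colIdx L ℓ h j k')‖ ^ 2 :=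
        Finset.sum_congr rfl fun i _ => Finset.sum_congr rfl fun k _ => hcol _
    _ = ∑ i : Fin (2 ^ L / 2 ^ ℓ), ∑ j : Fin (2 ^ ℓ), ∑ k : Fin (2 ^ ℓ),
          ∑ k' : Fin (2 ^ L / 2 ^ ℓ), ‖M (rowIdx L ℓ h i k) (colIdx L ℓ h j k')‖ ^ 2 :=
        Finset.sum_congr rfl fun i _ => Finset.sum_comm
    _ = _ := rfl

lemma mul_block (L ℓ : ℕ) (h : ℓ ≤ L)
    (X Y : Matrix (Fin (2 ^ L)) (Fin (2 ^ L)) ℂ)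
    (hX : ∀ a b, X a b ≠ 0 → (a : ℕ) % (2 ^ L / 2 ^ ℓ) = (b : ℕ) % (2 ^ L / 2 ^ ℓ))
    (hY : ∀ a b, Y a b ≠ 0 → (a : ℕ) / (2 ^ L / 2 ^ ℓ) = (b : ℕ) / (2 ^ L / 2 ^ ℓ))
    (i : Fin (2 ^ L / 2 ^ ℓ)) (j : Fin (2 ^ ℓ)) (k : Fin (2 ^ ℓ)) (k' : Fin (2 ^ L / 2 ^ ℓ)) :
    (X * Y) (rowIdx L ℓ h i k) (colIdx L ℓ h j k') =
      X (rowIdx L ℓ h i k) (colIdx L ℓ h j i) * Y (colIdx L ℓ h j i) (colIdx L ℓ h j k') := by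
  have hmpos : 0 < 2 ^ L / 2 ^ ℓ := by
    rw [two_pow_div L ℓ h]; positivity
  rw [Matrix.mul_apply]
  apply Finset.sum_eq_single_of_mem _ (Finset.mem_univ _)
  intro c _ hne
  by_cases hx : X (rowIdx L ℓ h i k) c = 0
  · rw [hx, zero_mul]
  by_cases hy : Y c (colIdx L ℓ h j k') = 0
  · rw [hy, mul_zero]
  exfalso
  apply hne
  have e1 := hX _ _ hx
  have e2 := hY _ _ hy
  have r1 : ((rowIdx L ℓ h i k : Fin (2 ^ L)) : ℕ) % (2 ^ L / 2 ^ ℓ) = (i : ℕ) := by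
    show ((i : ℕ) + (k : ℕ) * (2 ^ L / 2 ^ ℓ)) % (2 ^ L / 2 ^ ℓ) = (i : ℕ)
    rw [Nat.add_mul_mod_self_right, Nat.mod_eq_of_lt i.isLt]
  have r2 : ((colIdx L ℓ h j k' : Fin (2 ^ L)) : ℕ) / (2 ^ L / 2 ^ ℓ) = (j : ℕ) := by
    show ((j : ℕ) * (2 ^ L / 2 ^ ℓ) + (k' : ℕ)) / (2 ^ L / 2 ^ ℓ) = (j : ℕ)
    rw [Nat.mul_comm, Nat.mul_add_div hmpos, Nat.div_eq_of_lt k'.isLt, Nat.add_zero]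
  rw [r1] at e1
  rw [r2] at e2
  apply Fin.ext
  show (c : ℕ) = (j : ℕ) * (2 ^ L / 2 ^ ℓ) + (i : ℕ)
  calc (c : ℕ) = (2 ^ L / 2 ^ ℓ) * ((c : ℕ) / (2 ^ L / 2 ^ ℓ)) + (c : ℕ) % (2 ^ L / 2 ^ ℓ) :=
        (Nat.div_add_mod _ _).symm
    _ = (j : ℕ) * (2 ^ L / 2 ^ ℓ) + (i : ℕ) := by rw [e2, ← e1]; ring

lemma construct_blocks (L ℓ : ℕ) (h : ℓ ≤ L)
    (x : Fin (2 ^ L / 2 ^ ℓ) → Fin (2 ^ ℓ) → Fin (2 ^ ℓ) → ℂ)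
    (y : Fin (2 ^ L / 2 ^ ℓ) → Fin (2 ^ ℓ) → Fin (2 ^ L / 2 ^ ℓ) → ℂ) :
    ∃ X Y : Matrix (Fin (2 ^ L)) (Fin (2 ^ L)) ℂ,
      (∀ a b, X a b ≠ 0 → (a : ℕ) % (2 ^ L / 2 ^ ℓ) = (b : ℕ) % (2 ^ L / 2 ^ ℓ)) ∧
      (∀ a b, Y a b ≠ 0 → (a : ℕ) / (2 ^ L / 2 ^ ℓ) = (b : ℕ) / (2 ^ L / 2 ^ ℓ)) ∧
      ∀ i j k k', (X * Y) (rowIdx L ℓ h i k) (colIdx L ℓ h j k') = x i j k * y i j k' := by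
  have hmpos : 0 < 2 ^ L / 2 ^ ℓ := by
    rw [two_pow_div L ℓ h]; positivity
  have hdiv : ∀ c : Fin (2 ^ L), (c : ℕ) / (2 ^ L / 2 ^ ℓ) < 2 ^ ℓ := fun c =>
    (Nat.div_lt_iff_lt_mul hmpos).2 (by rw [two_pow_mul_div L ℓ h]; exact c.isLt)
  have hmod : ∀ c : Fin (2 ^ L), (c : ℕ) % (2 ^ L / 2 ^ ℓ) < 2 ^ L / 2 ^ ℓ := fun c =>
    Nat.mod_lt _ hmpos
  set X : Matrix (Fin (2 ^ L)) (Fin (2 ^ L)) ℂ := Matrix.of fun a b =>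
    if (a : ℕ) % (2 ^ L / 2 ^ ℓ) = (b : ℕ) % (2 ^ L / 2 ^ ℓ) then
      x ⟨_, hmod a⟩ ⟨_, hdiv b⟩ ⟨_, hdiv a⟩ else 0 with hXdef
  set Y : Matrix (Fin (2 ^ L)) (Fin (2 ^ L)) ℂ := Matrix.of fun a b =>
    if (a : ℕ) / (2 ^ L / 2 ^ ℓ) = (b : ℕ) / (2 ^ L / 2 ^ ℓ) then
      y ⟨_, hmod a⟩ ⟨_, hdiv a⟩ ⟨_, hmod b⟩ else 0 with hYdef
  have SX : ∀ a b, X a b ≠ 0 → (a : ℕ) % (2 ^ L / 2 ^ ℓ) = (b : ℕ) % (2 ^ L / 2 ^ ℓ) := by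
    intro a b hab
    by_contra hne
    apply hab
    rw [hXdef]
    simp only [Matrix.of_apply, if_neg hne]
  have SY : ∀ a b, Y a b ≠ 0 → (a : ℕ) / (2 ^ L / 2 ^ ℓ) = (b : ℕ) / (2 ^ L / 2 ^ ℓ) := by
    intro a b hab
    by_contra hne
    apply hab
    rw [hYdef]
    simp only [Matrix.of_apply, if_neg hne]
  refine ⟨X, Y, SX, SY, fun i j k k' => ?_⟩
  rw [mul_block L ℓ h X Y SX SY i j k k']
  have nr1 : ((rowIdx L ℓ h i k : Fin (2 ^ L)) : ℕ) % (2 ^ L / 2 ^ ℓ) = (i : ℕ) := by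
    show ((i : ℕ) + (k : ℕ) * (2 ^ L / 2 ^ ℓ)) % (2 ^ L / 2 ^ ℓ) = (i : ℕ)
    rw [Nat.add_mul_mod_self_right, Nat.mod_eq_of_lt i.isLt]
  have nr2 : ((rowIdx L ℓ h i k : Fin (2 ^ L)) : ℕ) / (2 ^ L / 2 ^ ℓ) = (k : ℕ) := by
    show ((i : ℕ) + (k : ℕ) * (2 ^ L / 2 ^ ℓ)) / (2 ^ L / 2 ^ ℓ) = (k : ℕ)
    rw [Nat.add_mul_div_right _ _ hmpos, Nat.div_eq_of_lt i.isLt, Nat.zero_add]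
  have nc1 : ∀ k'' : Fin (2 ^ L / 2 ^ ℓ),
      ((colIdx L ℓ h j k'' : Fin (2 ^ L)) : ℕ) % (2 ^ L / 2 ^ ℓ) = (k'' : ℕ) := by
    intro k''
    show ((j : ℕ) * (2 ^ L / 2 ^ ℓ) + (k'' : ℕ)) % (2 ^ L / 2 ^ ℓ) = (k'' : ℕ)
    rw [Nat.mul_comm, Nat.mul_add_mod, Nat.mod_eq_of_lt k''.isLt]
  have nc2 : ∀ k'' : Fin (2 ^ L / 2 ^ ℓ),
      ((colIdx L ℓ h j k'' : Fin (2 ^ L)) : ℕ) / (2 ^ L / 2 ^ ℓ) = (j : ℕ) := by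
    intro k''
    show ((j : ℕ) * (2 ^ L / 2 ^ ℓ) + (k'' : ℕ)) / (2 ^ L / 2 ^ ℓ) = (j : ℕ)
    rw [Nat.mul_comm, Nat.mul_add_div hmpos, Nat.div_eq_of_lt k''.isLt, Nat.add_zero]
  have hXval : X (rowIdx L ℓ h i k) (colIdx L ℓ h j i) = x i j k := by
    rw [hXdef]
    simp only [Matrix.of_apply]
    rw [if_pos (by rw [nr1, nc1])]
    have ei : (⟨((rowIdx L ℓ h i k : Fin (2 ^ L)) : ℕ) % (2 ^ L / 2 ^ ℓ),
        hmod (rowIdx L ℓ h i k)⟩ : Fin (2 ^ L / 2 ^ ℓ)) = i := Fin.ext nr1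
    have ej : (⟨((colIdx L ℓ h j i : Fin (2 ^ L)) : ℕ) / (2 ^ L / 2 ^ ℓ),
        hdiv (colIdx L ℓ h j i)⟩ : Fin (2 ^ ℓ)) = j := Fin.ext (nc2 i)
    have ek : (⟨((rowIdx L ℓ h i k : Fin (2 ^ L)) : ℕ) / (2 ^ L / 2 ^ ℓ),
        hdiv (rowIdx L ℓ h i k)⟩ : Fin (2 ^ ℓ)) = k := Fin.ext nr2
    rw [ei, ej, ek]
  have hYval : Y (colIdx L ℓ h j i) (colIdx L ℓ h j k') = y i j k' := by
    rw [hYdef]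
    simp only [Matrix.of_apply]
    rw [if_pos (by rw [nc2, nc2])]
    have ei : (⟨((colIdx L ℓ h j i : Fin (2 ^ L)) : ℕ) % (2 ^ L / 2 ^ ℓ),
        hmod (colIdx L ℓ h j i)⟩ : Fin (2 ^ L / 2 ^ ℓ)) = i := Fin.ext (nc1 i)
    have ej : (⟨((colIdx L ℓ h j i : Fin (2 ^ L)) : ℕ) / (2 ^ L / 2 ^ ℓ),
        hdiv (colIdx L ℓ h j i)⟩ : Fin (2 ^ ℓ)) = j := Fin.ext (nc2 i)
    have ek : (⟨((colIdx L ℓ h j k' : Fin (2 ^ L)) : ℕ) % (2 ^ L / 2 ^ ℓ),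
        hmod (colIdx L ℓ h j k')⟩ : Fin (2 ^ L / 2 ^ ℓ)) = k' := Fin.ext (nc1 k')
    rw [ei, ej, ek]
  rw [hXval, hYval]
lemma sInf_sum_sets {ι : Type*} [Fintype ι] (T : ι → Set ℝ)
    (hne : ∀ i, (T i).Nonempty) (h0 : ∀ i, ∀ t ∈ T i, 0 ≤ t) :
    sInf {t : ℝ | ∃ g : ι → ℝ, (∀ i, g i ∈ T i) ∧ t = ∑ i, g i} = ∑ i, sInf (T i) := by
  have hbdd : ∀ i, BddBelow (T i) := fun i => ⟨0, fun t ht => h0 i t ht⟩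
  have hSne : Set.Nonempty {t : ℝ | ∃ g : ι → ℝ, (∀ i, g i ∈ T i) ∧ t = ∑ i, g i} :=
    ⟨∑ i, (hne i).choose, fun i => (hne i).choose, fun i => (hne i).choose_spec, rfl⟩
  have hSbdd : BddBelow {t : ℝ | ∃ g : ι → ℝ, (∀ i, g i ∈ T i) ∧ t = ∑ i, g i} := by
    refine ⟨0, ?_⟩
    rintro t ⟨g, hg, rfl⟩
    exact Finset.sum_nonneg fun i _ => h0 i (g i) (hg i)
  apply le_antisymm
  · refine le_of_forall_pos_le_add fun ε hε => ?_
    set c : ℝ := (Fintype.card ι : ℝ) + 1 with hc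
    have hcpos : 0 < c := by positivity
    have hεc : 0 < ε / c := div_pos hε hcpos
    have hchoice : ∀ i, ∃ t ∈ T i, t < sInf (T i) + ε / c := fun i =>
      exists_lt_of_csInf_lt (hne i) (by linarith)
    choose g hg1 hg2 using hchoice
    have hmem : (∑ i, g i) ∈ {t : ℝ | ∃ g : ι → ℝ, (∀ i, g i ∈ T i) ∧ t = ∑ i, g i} :=
      ⟨g, hg1, rfl⟩
    have h1 := csInf_le hSbdd hmem
    have h2 : ∑ i, g i ≤ ∑ i, (sInf (T i) + ε / c) :=
      Finset.sum_le_sum fun i _ => le_of_lt (hg2 i)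
    have h3 : ∑ i, (sInf (T i) + ε / c) = (∑ i, sInf (T i)) + (Fintype.card ι : ℝ) * (ε / c) := by
      rw [Finset.sum_add_distrib, Finset.sum_const, Finset.card_univ, nsmul_eq_mul]
    have h4 : (Fintype.card ι : ℝ) * (ε / c) ≤ c * (ε / c) := by
      apply mul_le_mul_of_nonneg_right _ (le_of_lt hεc)
      rw [hc]; linarith
    have h5 : c * (ε / c) = ε := mul_div_cancel₀ ε (ne_of_gt hcpos)
    linarith
  · apply le_csInf hSne
    rintro t ⟨g, hg, rfl⟩
    exact Finset.sum_le_sum fun i _ => csInf_le (hbdd i) (hg i)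

/-- For `L ≥ 2`, `N = 2^L`, `ℓ ∈ {1,…,L-1}` and `A ∈ ℂ^{N×N}`, the
infimum over `M = XY` in the `ℓ`-th Monarch class (`supp(X) ⊆ supp(S_1 ⋯ S_ℓ)`,
`supp(Y) ⊆ supp(S_{ℓ+1} ⋯ S_L)`) of `‖A - M‖_F²` equals the sum over `i, j` of the infimum
over vectors `x` on `R^(ℓ)_i` and `y` on `C^(ℓ)_j` of `‖A_{R^(ℓ)_i,C^(ℓ)_j} - x y*‖_F²`. -/
theorem inf_monarch_approx (L : ℕ) (hL : 2 ≤ L) (ℓ : ℕ) (hℓ1 : 1 ≤ ℓ) (hℓ2 : ℓ ≤ L - 1)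
    (A : Matrix (Fin (2 ^ L)) (Fin (2 ^ L)) ℂ) :
    sInf {t : ℝ | ∃ X Y : Matrix (Fin (2 ^ L)) (Fin (2 ^ L)) ℂ,
        (∀ a b, X a b ≠ 0 →
          (List.ofFn fun p : Fin ℓ =>
            bflySupp L ((p : ℕ) + 1) (by omega) (by have := p.isLt; omega)).prod a b ≠ 0) ∧
        (∀ a b, Y a b ≠ 0 →
          (List.ofFn fun p : Fin (L - ℓ) =>
            bflySupp L (ℓ + 1 + (p : ℕ)) (by omega) (by have := p.isLt; omega)).prod a b ≠ 0) ∧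
        t = frobSq (A - X * Y)}
      = ∑ i : Fin (2 ^ L / 2 ^ ℓ), ∑ j : Fin (2 ^ ℓ),
          sInf {t : ℝ | ∃ (x : Fin (2 ^ ℓ) → ℂ) (y : Fin (2 ^ L / 2 ^ ℓ) → ℂ),
            t = frobSq
              (A.submatrix (rowIdx L ℓ (by omega) i) (colIdx L ℓ (by omega) j)
                - Matrix.vecMulVec x (star y))} := by
  have hℓL : ℓ ≤ L := by omega
  set T : Fin (2 ^ L / 2 ^ ℓ) × Fin (2 ^ ℓ) → Set ℝ := fun p =>
    {t : ℝ | ∃ (x : Fin (2 ^ ℓ) → ℂ) (y : Fin (2 ^ L / 2 ^ ℓ) → ℂ),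
      t = frobSq (A.submatrix (rowIdx L ℓ hℓL p.1) (colIdx L ℓ hℓL p.2)
        - Matrix.vecMulVec x (star y))} with hT
  have hTne : ∀ p, (T p).Nonempty := fun p => ⟨_, 0, 0, rfl⟩
  have hT0 : ∀ p, ∀ t ∈ T p, 0 ≤ t := by
    rintro p t ⟨x, y, rfl⟩
    exact frobSq_nonneg _
  have key := sInf_sum_sets T hTne hT0
  have hset : {t : ℝ | ∃ X Y : Matrix (Fin (2 ^ L)) (Fin (2 ^ L)) ℂ,
        (∀ a b, X a b ≠ 0 →
          (List.ofFn fun p : Fin ℓ =>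
            bflySupp L ((p : ℕ) + 1) (by omega) (by have := p.isLt; omega)).prod a b ≠ 0) ∧
        (∀ a b, Y a b ≠ 0 →
          (List.ofFn fun p : Fin (L - ℓ) =>
            bflySupp L (ℓ + 1 + (p : ℕ)) (by omega) (by have := p.isLt; omega)).prod a b ≠ 0) ∧
        t = frobSq (A - X * Y)}
      = {t : ℝ | ∃ g : Fin (2 ^ L / 2 ^ ℓ) × Fin (2 ^ ℓ) → ℝ,
          (∀ i, g i ∈ T i) ∧ t = ∑ i, g i} := by
    ext t
    simp only [Set.mem_setOf_eq]
    constructor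
    · rintro ⟨X, Y, hX, hY, rfl⟩
      have hX' : ∀ a b, X a b ≠ 0 → (a : ℕ) % (2 ^ L / 2 ^ ℓ) = (b : ℕ) % (2 ^ L / 2 ^ ℓ) := by
        intro a b hab
        have h9 := hX a b hab
        rw [prodX_apply L ℓ hℓL _ _ a b] at h9
        rw [two_pow_div L ℓ hℓL]
        by_contra hne
        rw [if_neg hne] at h9
        exact h9 rfl
      have hY' : ∀ a b, Y a b ≠ 0 → (a : ℕ) / (2 ^ L / 2 ^ ℓ) = (b : ℕ) / (2 ^ L / 2 ^ ℓ) := by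
        intro a b hab
        have h9 := hY a b hab
        rw [prodY_apply L ℓ hℓL _ _ a b] at h9
        rw [two_pow_div L ℓ hℓL]
        by_contra hne
        rw [if_neg hne] at h9
        exact h9 rfl
      refine ⟨fun p => frobSq (A.submatrix (rowIdx L ℓ hℓL p.1) (colIdx L ℓ hℓL p.2)
          - Matrix.vecMulVec (fun k => X (rowIdx L ℓ hℓL p.1 k) (colIdx L ℓ hℓL p.2 p.1))
            (fun k' => Y (colIdx L ℓ hℓL p.2 p.1) (colIdx L ℓ hℓL p.2 k'))), ?_, ?_⟩
      · intro p
        refine ⟨(fun k => X (rowIdx L ℓ hℓL p.1 k) (colIdx L ℓ hℓL p.2 p.1)),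
          star (fun k' => Y (colIdx L ℓ hℓL p.2 p.1) (colIdx L ℓ hℓL p.2 k')), ?_⟩
        rw [star_star]
      · rw [frobSq_blocks L ℓ hℓL (A - X * Y), Fintype.sum_prod_type]
        refine Finset.sum_congr rfl fun i _ => Finset.sum_congr rfl fun j _ => ?_
        congr 1
        ext k k'
        simp only [Matrix.submatrix_apply, Matrix.sub_apply, Matrix.vecMulVec_apply]
        rw [mul_block L ℓ hℓL X Y hX' hY' i j k k']
    · rintro ⟨g, hg, rfl⟩
      choose xf yf hxy using hg
      obtain ⟨X, Y, SX, SY, hEval⟩ := construct_blocks L ℓ hℓL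
        (fun i j k => xf (i, j) k) (fun i j k' => star (yf (i, j) k'))
      refine ⟨X, Y, ?_, ?_, ?_⟩
      · intro a b hab
        rw [prodX_apply L ℓ hℓL]
        have h9 := SX a b hab
        rw [two_pow_div L ℓ hℓL] at h9
        rw [if_pos h9]
        exact one_ne_zero
      · intro a b hab
        rw [prodY_apply L ℓ hℓL]
        have h9 := SY a b hab
        rw [two_pow_div L ℓ hℓL] at h9
        rw [if_pos h9]
        exact one_ne_zero
      · rw [frobSq_blocks L ℓ hℓL (A - X * Y), Fintype.sum_prod_type]
        refine Finset.sum_congr rfl fun i _ => Finset.sum_congr rfl fun j _ => ?_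
        rw [hxy (i, j)]
        congr 1
        ext k k'
        simp only [Matrix.submatrix_apply, Matrix.sub_apply, Matrix.vecMulVec_apply,
          Pi.star_apply]
        rw [hEval i j k k']
  have main := (hset.symm ▸ key).trans (Fintype.sum_prod_type _)
  exact main
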